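/- arXiv:2407.12225 — 3 statements merged into one kernel-verified Lean document; each statement's English description precedes it below -/
import Mathlib

section
/- Let f : ℝⁿ → ℝⁿ be continuously differentiable and P symmetric positive definite. If for every z ∈ ℝⁿ the Jacobian satisfies (Df(z))ᵀP + P·Df(z) ⪯ 2c·P, then f is one-sided Lipschitz in the P-weighted inner product: for all x, y ∈ ℝⁿ, (x − y)ᵀ P (f(x) − f(y)) ≤ c·(x − y)ᵀ P (x − y). -/
open Matrix

/-- key pointwise inequality -/
lemma key_ineq {n : ℕ} (P A : Matrix (Fin n) (Fin n) ℝ) (hPsymm : P.IsSymm) (c : ℝ)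
    (h : ((2 * c) • P - (Aᵀ * P + P * A)).PosSemidef) (v : Fin n → ℝ) :
    v ⬝ᵥ (P *ᵥ (A *ᵥ v)) ≤ c * (v ⬝ᵥ (P *ᵥ v)) := by
  have h0 := h.dotProduct_mulVec_nonneg v
  simp only [star_trivial] at h0
  rw [sub_mulVec, add_mulVec, dotProduct_sub, dotProduct_add, smul_mulVec,
    dotProduct_smul, ← mulVec_mulVec, ← mulVec_mulVec] at h0
  have sym : ∀ a b : Fin n → ℝ, a ⬝ᵥ (P *ᵥ b) = b ⬝ᵥ (P *ᵥ a) := by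
    intro a b
    rw [dotProduct_mulVec, ← mulVec_transpose, hPsymm.eq, dotProduct_comm]
  have e1 : v ⬝ᵥ (Aᵀ *ᵥ (P *ᵥ v)) = v ⬝ᵥ (P *ᵥ (A *ᵥ v)) := by
    rw [dotProduct_mulVec, vecMul_transpose, sym]
  rw [e1] at h0
  simp only [smul_eq_mul] at h0
  nlinarith [h0]

lemma dotL_linear {n : ℕ} (v : Fin n → ℝ) :
    IsLinearMap ℝ (fun w : Fin n → ℝ => v ⬝ᵥ w) :=
  ⟨fun a b => dotProduct_add v a b, fun r a => by simp [dotProduct_smul]⟩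

/-- Demidovich condition: if the Jacobian `J z` of a `C¹` map `f` satisfies
the LMI `(J z)ᵀ P + P (J z) ⪯ 2cP` at every point, then `f` is one-sided
Lipschitz with constant `c` in the `P`-weighted inner product. -/
theorem stmt_5 {n : ℕ} (f : (Fin n → ℝ) → (Fin n → ℝ))
    (J : (Fin n → ℝ) → Matrix (Fin n) (Fin n) ℝ)
    (hf : ∀ z, HasFDerivAt f ((J z).mulVecLin).toContinuousLinearMap z)
    (hJcont : Continuous J)
    (P : Matrix (Fin n) (Fin n) ℝ) (hPsymm : P.IsSymm) (hP : P.PosDef) (c : ℝ)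
    (hLMI : ∀ z, ((2 * c) • P - ((J z)ᵀ * P + P * (J z))).PosSemidef) :
    ∀ x y : Fin n → ℝ,
      (x - y) ⬝ᵥ (P *ᵥ (f x - f y)) ≤ c * ((x - y) ⬝ᵥ (P *ᵥ (x - y))) := by
  intro x y
  set v : Fin n → ℝ := x - y with hv
  set K : ℝ := c * (v ⬝ᵥ (P *ᵥ v)) with hK
  -- the linear functional w ↦ v ⬝ᵥ (P *ᵥ w)
  set L : (Fin n → ℝ) →L[ℝ] ℝ :=
    LinearMap.toContinuousLinearMap
      (((dotL_linear v).mk' _).comp P.mulVecLin) with hL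
  have hLapply : ∀ w, L w = v ⬝ᵥ (P *ᵥ w) := fun w => rfl
  -- the path
  set γ : ℝ → (Fin n → ℝ) := fun t => y + t • v with hγ
  have hγd : ∀ t : ℝ, HasDerivAt γ v t := by
    intro t
    have h1 : HasDerivAt (fun t : ℝ => t • v) ((1:ℝ) • v) t :=
      (hasDerivAt_id t).smul_const v
    have h2 := h1.const_add y
    rw [one_smul] at h2
    exact h2
  -- ψ t = L (f (γ t)) - t * K
  set ψ : ℝ → ℝ := fun t => L (f (γ t)) - t * K with hψ
  have hψd : ∀ t : ℝ, HasDerivAt ψ (L ((J (γ t)) *ᵥ v) - K) t := by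
    intro t
    have h1 : HasDerivAt (fun t => f (γ t)) ((J (γ t)) *ᵥ v) t := by
      have := (hf (γ t)).comp_hasDerivAt t (hγd t)
      exact this
    have h2 : HasDerivAt (fun t => L (f (γ t))) (L ((J (γ t)) *ᵥ v)) t :=
      (L.hasFDerivAt.comp_hasDerivAt t h1)
    have h3 := h2.sub ((hasDerivAt_id t).mul_const K)
    rw [one_mul] at h3
    exact h3
  have hanti : Antitone ψ := by
    apply antitone_of_deriv_nonpos
    · exact fun t => (hψd t).differentiableAt
    · intro t
      rw [(hψd t).deriv]
      have := key_ineq P (J (γ t)) hPsymm c (hLMI (γ t)) v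
      rw [hLapply]
      linarith
  have h01 : ψ 1 ≤ ψ 0 := hanti (by norm_num)
  have hγ1 : γ 1 = x := by simp [hγ, hv]
  have hγ0 : γ 0 = y := by simp [hγ]
  simp only [hψ, hγ1, hγ0, hLapply, one_mul, zero_mul, sub_zero] at h01
  have : v ⬝ᵥ (P *ᵥ (f x - f y)) = v ⬝ᵥ (P *ᵥ f x) - v ⬝ᵥ (P *ᵥ f y) := by
    rw [mulVec_sub, dotProduct_sub]
  rw [this]
  linarith
end

section
/- Let f : ℝⁿ → ℝⁿ satisfy the one-sided Lipschitz condition ⟨x − y, f(x) − f(y)⟩_P ≤ c‖x − y‖²_P for all x, y (where ⟨u,v⟩_P = uᵀPv and ‖u‖²_P = uᵀPu, P symmetric positive definite). If x, y : [0,∞) → ℝⁿ are differentiable solutions of ẋ = f(x) and ẏ = f(y), then ‖x(t) − y(t)‖_P ≤ e^{ct}‖x(0) − y(0)‖_P for all t ≥ 0. -/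
open Matrix

/-- Contraction estimate: if `f` is one-sided Lipschitz with constant `c` in
the `P`-weighted inner product and `x, y` solve `ẋ = f(x)`, `ẏ = f(y)`, then
`‖x(t) - y(t)‖_P ≤ e^{ct} ‖x(0) - y(0)‖_P` for all `t ≥ 0`. -/
theorem stmt_6 {n : ℕ} (f : (Fin n → ℝ) → (Fin n → ℝ)) (hf : Continuous f)
    (P : Matrix (Fin n) (Fin n) ℝ) (hPsymm : P.IsSymm) (hP : P.PosDef) (c : ℝ)
    (hOSL : ∀ x y : Fin n → ℝ,
      (x - y) ⬝ᵥ (P *ᵥ (f x - f y)) ≤ c * ((x - y) ⬝ᵥ (P *ᵥ (x - y))))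
    (x y : ℝ → (Fin n → ℝ))
    (hx : ∀ t, HasDerivAt x (f (x t)) t) (hy : ∀ t, HasDerivAt y (f (y t)) t) :
    ∀ t ≥ (0 : ℝ),
      Real.sqrt ((x t - y t) ⬝ᵥ (P *ᵥ (x t - y t)))
        ≤ Real.exp (c * t) * Real.sqrt ((x 0 - y 0) ⬝ᵥ (P *ᵥ (x 0 - y 0))) := by
  set z : ℝ → (Fin n → ℝ) := fun t => x t - y t with hzdef
  set w : ℝ → (Fin n → ℝ) := fun t => f (x t) - f (y t) with hwdef
  have hzi : ∀ t i, HasDerivAt (fun t => z t i) (w t i) t := by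
    intro t i
    have := hasDerivAt_pi.mp ((hx t).sub (hy t)) i
    simpa [hzdef, hwdef] using this
  set V : ℝ → ℝ := fun t => z t ⬝ᵥ (P *ᵥ z t) with hVdef
  have hVderiv : ∀ t, HasDerivAt V
      (w t ⬝ᵥ (P *ᵥ z t) + z t ⬝ᵥ (P *ᵥ w t)) t := by
    intro t
    have : HasDerivAt (fun s => ∑ i, z s i * ∑ j, P i j * z s j)
        (∑ i, (w t i * ∑ j, P i j * z t j + z t i * ∑ j, P i j * w t j)) t := by
      apply HasDerivAt.fun_sum
      intro i _
      exact (hzi t i).mul (HasDerivAt.fun_sum fun j _ => (hzi t j).const_mul (P i j))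
    have heq : (fun s => ∑ i, z s i * ∑ j, P i j * z s j) = V := by
      funext s
      simp [hVdef, dotProduct, mulVec]
    rw [heq] at this
    convert this using 1
    simp [dotProduct, mulVec, Finset.sum_add_distrib]
  have hsym : ∀ t, w t ⬝ᵥ (P *ᵥ z t) = z t ⬝ᵥ (P *ᵥ w t) := by
    intro t
    rw [dotProduct_mulVec, ← mulVec_transpose, hPsymm.eq, dotProduct_comm]
  have hVderiv2 : ∀ t, HasDerivAt V (2 * (z t ⬝ᵥ (P *ᵥ w t))) t := by
    intro t
    have := hVderiv t
    rwa [hsym t, ← two_mul] at this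
  have hVle : ∀ t, 2 * (z t ⬝ᵥ (P *ᵥ w t)) ≤ 2 * c * V t := by
    intro t
    have := hOSL (x t) (y t)
    simp only [hVdef, hzdef, hwdef]
    nlinarith [this]
  -- g t = V t * exp (-(2*c)*t) is antitone
  set g : ℝ → ℝ := fun t => V t * Real.exp (-(2 * c) * t) with hgdef
  have hg : ∀ t, HasDerivAt g
      (2 * (z t ⬝ᵥ (P *ᵥ w t)) * Real.exp (-(2 * c) * t)
        + V t * (Real.exp (-(2 * c) * t) * (-(2 * c)))) t := by
    intro t
    have he : HasDerivAt (fun s => Real.exp (-(2 * c) * s))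
        (Real.exp (-(2 * c) * t) * (-(2 * c))) t := by
      simpa [mul_comm] using (((hasDerivAt_id t).const_mul (-(2 * c))).exp)
    exact (hVderiv2 t).mul he
  have hganti : Antitone g := by
    apply antitone_of_hasDerivAt_nonpos hg
    intro t
    simp only [Pi.zero_apply]
    have h1 := hVle t
    have h2 : (0:ℝ) < Real.exp (-(2 * c) * t) := Real.exp_pos _
    nlinarith [mul_le_mul_of_nonneg_right h1 h2.le]
  intro t ht
  have hgle : g t ≤ g 0 := hganti ht
  have hVt : V t ≤ Real.exp (2 * c * t) * V 0 := by
    have hgle' : V t * Real.exp (-(2 * c) * t) ≤ V 0 := by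
      simpa [hgdef] using hgle
    have hid : V t = (V t * Real.exp (-(2 * c) * t)) * Real.exp (2 * c * t) := by
      rw [mul_assoc, ← Real.exp_add, show -(2 * c) * t + 2 * c * t = 0 by ring,
        Real.exp_zero, mul_one]
    rw [hid, mul_comm (Real.exp (2 * c * t)) (V 0)]
    exact mul_le_mul_of_nonneg_right hgle' (Real.exp_nonneg _)
  have hV0 : 0 ≤ V 0 := hP.posSemidef.dotProduct_mulVec_nonneg (z 0)
  have key : Real.sqrt (V t) ≤ Real.exp (c * t) * Real.sqrt (V 0) := by
    calc Real.sqrt (V t) ≤ Real.sqrt (Real.exp (2 * c * t) * V 0) :=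
          Real.sqrt_le_sqrt hVt
      _ = Real.exp (c * t) * Real.sqrt (V 0) := by
          rw [Real.sqrt_mul (Real.exp_nonneg _), show (2:ℝ) * c * t = c * t + c * t
            by ring, Real.exp_add, Real.sqrt_mul_self (Real.exp_nonneg _)]
  simpa [hVdef, hzdef] using key
end

section
/- Let f : ℝⁿ → ℝⁿ be C¹ and suppose for each z ∈ ℝⁿ, the Jacobian Df(z) lies in the convex hull of finitely many matrices A₁, …, A_k. If there exist P ≻ 0 and c ∈ ℝ with Aᵢᵀ P + P Aᵢ ⪯ 2cP for each i, then (x − y)ᵀ P (f(x) − f(y)) ≤ c (x − y)ᵀ P (x − y) for all x, y ∈ ℝⁿ. -/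
open Matrix Finset

/-- Convex-hull method: if the Jacobian of a `C¹` map `f` lies pointwise in
the convex hull of matrices `A₁, …, A_k`, and `P ≻ 0`, `c` satisfy the LMIs
`Aᵢᵀ P + P Aᵢ ⪯ 2cP` for each `i`, then `f` is one-sided Lipschitz with
constant `c` in the `P`-weighted inner product. -/
theorem stmt_12 {n k : ℕ} (f : (Fin n → ℝ) → (Fin n → ℝ))
    (J : (Fin n → ℝ) → Matrix (Fin n) (Fin n) ℝ)
    (hf : ∀ z, HasFDerivAt f ((J z).mulVecLin).toContinuousLinearMap z)
    (hJcont : Continuous J)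
    (A : Fin k → Matrix (Fin n) (Fin n) ℝ)
    (hconv : ∀ z, ∃ w : Fin k → ℝ, (∀ i, 0 ≤ w i) ∧ (∑ i, w i) = 1 ∧
      J z = ∑ i, w i • A i)
    (P : Matrix (Fin n) (Fin n) ℝ) (hPsymm : P.IsSymm) (hP : P.PosDef) (c : ℝ)
    (hLMI : ∀ i, ((2 * c) • P - ((A i)ᵀ * P + P * (A i))).PosSemidef) :
    ∀ x y : Fin n → ℝ,
      (x - y) ⬝ᵥ (P *ᵥ (f x - f y)) ≤ c * ((x - y) ⬝ᵥ (P *ᵥ (x - y))) := by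
  intro x y
  set v : Fin n → ℝ := x - y with hv
  set q : ℝ := v ⬝ᵥ (P *ᵥ v) with hq
  -- quadratic form in the matrix, as a linear map
  let T : Matrix (Fin n) (Fin n) ℝ →ₗ[ℝ] ℝ :=
    { toFun := fun M => v ⬝ᵥ (P *ᵥ (M *ᵥ v))
      map_add' := fun M N => by
        simp [add_mulVec, mulVec_add, dotProduct_add]
      map_smul' := fun r M => by
        simp [smul_mulVec, mulVec_smul, dotProduct_smul] }
  -- pointwise bound from LMIs
  have key : ∀ z, v ⬝ᵥ (P *ᵥ (J z *ᵥ v)) ≤ c * q := by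
    intro z
    obtain ⟨w, hw0, hw1, hJz⟩ := hconv z
    have hterm : ∀ i, v ⬝ᵥ (P *ᵥ (A i *ᵥ v)) ≤ c * q := by
      intro i
      have h := (hLMI i).dotProduct_mulVec_nonneg v
      simp only [star_trivial, sub_mulVec, add_mulVec, smul_mulVec,
        dotProduct_sub, dotProduct_add, dotProduct_smul, smul_eq_mul] at h
      have e1 : v ⬝ᵥ (((A i)ᵀ * P) *ᵥ v) = v ⬝ᵥ (P *ᵥ (A i *ᵥ v)) := by
        rw [← mulVec_mulVec, dotProduct_mulVec v (A i)ᵀ, vecMul_transpose,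
          dotProduct_mulVec, ← transpose_transpose P, vecMul_transpose,
          transpose_transpose, hPsymm.eq, dotProduct_comm]
      have e2 : v ⬝ᵥ ((P * A i) *ᵥ v) = v ⬝ᵥ (P *ᵥ (A i *ᵥ v)) := by
        rw [← mulVec_mulVec]
      rw [e1, e2] at h
      nlinarith [h]
    have hT : v ⬝ᵥ (P *ᵥ (J z *ᵥ v)) = T (J z) := rfl
    rw [hT, hJz, map_sum]
    calc ∑ i, T (w i • A i) = ∑ i, w i * (v ⬝ᵥ (P *ᵥ (A i *ᵥ v))) := by
          simp [_root_.map_smul, T]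
      _ ≤ ∑ i, w i * (c * q) :=
          Finset.sum_le_sum fun i _ => mul_le_mul_of_nonneg_left (hterm i) (hw0 i)
      _ = c * q := by rw [← Finset.sum_mul, hw1, one_mul]
  -- the auxiliary function
  set φ : ℝ → ℝ := fun t => v ⬝ᵥ (P *ᵥ f (y + t • v)) - t * (c * q) with hφ
  have hderiv : ∀ t : ℝ, HasDerivAt φ
      (v ⬝ᵥ (P *ᵥ (J (y + t • v) *ᵥ v)) - c * q) t := by
    intro t
    have hg : HasDerivAt (fun t : ℝ => y + t • v) v t := by
      simpa using ((hasDerivAt_id t).smul_const v).const_add y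
    have hfg : HasDerivAt (fun t : ℝ => f (y + t • v)) (J (y + t • v) *ᵥ v) t := by
      have := (hf (y + t • v)).comp_hasDerivAt t hg
      exact this
    let L : (Fin n → ℝ) →ₗ[ℝ] ℝ :=
      { toFun := fun u => v ⬝ᵥ (P *ᵥ u)
        map_add' := fun a b => by simp [mulVec_add, dotProduct_add]
        map_smul' := fun r a => by simp [mulVec_smul, dotProduct_smul] }
    have hL : HasDerivAt (fun t : ℝ => v ⬝ᵥ (P *ᵥ f (y + t • v)))
        (v ⬝ᵥ (P *ᵥ (J (y + t • v) *ᵥ v))) t :=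
      L.toContinuousLinearMap.hasFDerivAt.comp_hasDerivAt t hfg
    have h2 := hL.sub ((hasDerivAt_id t).mul_const (c * q))
    rw [one_mul] at h2
    exact h2
  have hmono : φ 1 ≤ φ 0 := by
    have hdiff : Differentiable ℝ φ := fun t => (hderiv t).differentiableAt
    have := antitoneOn_of_deriv_nonpos (convex_Icc (0:ℝ) 1)
      (hdiff.continuous.continuousOn)
      (fun t _ => (hdiff t).differentiableWithinAt)
      (fun t _ => by
        rw [(hderiv t).deriv]
        have := key (y + t • v)
        linarith)
    exact this (by norm_num : (0:ℝ) ∈ Set.Icc (0:ℝ) 1)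
      (by norm_num : (1:ℝ) ∈ Set.Icc (0:ℝ) 1) (by norm_num)
  have h0 : y + (0:ℝ) • v = y := by simp
  have h1 : y + (1:ℝ) • v = x := by simp [hv]
  simp only [hφ, h0, h1, one_mul, zero_mul, sub_zero] at hmono
  have hsplit : v ⬝ᵥ (P *ᵥ (f x - f y)) = v ⬝ᵥ (P *ᵥ f x) - v ⬝ᵥ (P *ᵥ f y) := by
    rw [mulVec_sub, dotProduct_sub]
  rw [hsplit]
  linarith
end
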